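/- For every k > 2 and every n ≥ 0, if p = t[0..2^n - 1] is the prefix of length 2^n of the Thue–Morse word t, then p^k is a simple k-power. -/

import Mathlib

/-- `p^k`: the word `p` concatenated `k` times. -/
def listPow {α : Type*} (p : List α) (k : ℕ) : List α := (List.replicate k p).flatten

/-- A `k`-power is a nonempty word of the form `p^k`. -/
def IsKPower {α : Type*} (k : ℕ) (w : List α) : Prop := ∃ p : List α, p ≠ [] ∧ w = listPow p k

/-- A simple `k`-power: a `k`-power none of whose proper factors is a `k`-power. -/
def SimpleKPower {α : Type*} (k : ℕ) (w : List α) : Prop :=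
  IsKPower k w ∧ ∀ y : List α, y <:+: w → y ≠ w → ¬ IsKPower k y

/-- The Thue–Morse word: `tm n` is the parity of the binary digit sum of `n`
(`false` plays the role of the letter 0). -/
def tm (n : ℕ) : Bool := (Nat.digits 2 n).sum % 2 == 1

/-! ### Basic recurrences for `tm` -/

lemma tm_zero : tm 0 = false := by simp [tm]

lemma tm_two_mul (n : ℕ) : tm (2 * n) = tm n := by
  rcases Nat.eq_zero_or_pos n with rfl | hn
  · rfl
  · unfold tm
    rw [Nat.digits_def' (by norm_num : 1 < 2) (by omega : 0 < 2 * n)]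
    simp [Nat.mul_div_cancel_left _ (by norm_num : 0 < 2), Nat.mul_mod_right]

lemma tm_two_mul_add_one (n : ℕ) : tm (2 * n + 1) = !tm n := by
  unfold tm
  rw [Nat.digits_def' (by norm_num : 1 < 2) (by omega : 0 < 2 * n + 1)]
  have h1 : (2 * n + 1) % 2 = 1 := by omega
  have h2 : (2 * n + 1) / 2 = n := by omega
  rw [h1, h2, List.sum_cons]
  rcases Nat.mod_two_eq_zero_or_one (Nat.digits 2 n).sum with h | h <;>
    simp [Nat.add_mod, h]

lemma tm_one : tm 1 = true := by
  have := tm_two_mul_add_one 0; simpa [tm_zero] using this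

lemma tm_five : tm 5 = false := by
  have h2 : tm 2 = true := by have := tm_two_mul 1; simpa [tm_one] using this
  have := tm_two_mul_add_one 2; simpa [h2] using this

lemma tm_six : tm 6 = false := by
  have h3 : tm 3 = false := by have := tm_two_mul_add_one 1; simpa [tm_one] using this
  have := tm_two_mul 3; simpa [h3] using this

/-! ### Overlap-freeness of Thue–Morse -/

lemma bool3 (a b c : Bool) (h1 : a ≠ b) (h2 : b ≠ c) (h3 : c ≠ a) : False := by
  revert h1 h2 h3; cases a <;> cases b <;> cases c <;> simp

lemma bool_not_ne (a b : Bool) (h : (!a) ≠ b) : a = b := by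
  revert h; cases a <;> cases b <;> simp

lemma tm_ne_succ_of_even {x : ℕ} (hx : x % 2 = 0) : tm x ≠ tm (x + 1) := by
  obtain ⟨a, rfl⟩ : ∃ a, x = 2 * a := ⟨x / 2, by omega⟩
  rw [tm_two_mul, tm_two_mul_add_one]
  cases tm a <;> simp

lemma tm_no_three (i : ℕ) (h1 : tm i = tm (i + 1)) (h2 : tm (i + 1) = tm (i + 2)) : False := by
  rcases Nat.mod_two_eq_zero_or_one i with h | h
  · exact tm_ne_succ_of_even h h1
  · exact tm_ne_succ_of_even (x := i + 1) (by omega) h2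

/-- Thue–Morse is overlap-free: no factor of the form `a x a x a`. -/
lemma tm_no_overlap : ∀ m, 1 ≤ m → ∀ s, (∀ j, j ≤ m → tm (s + j) = tm (s + j + m)) → False := by
  intro m
  induction m using Nat.strong_induction_on with
  | _ m IH =>
  intro hm s H
  have H' : ∀ x, s ≤ x → x ≤ s + m → tm x = tm (x + m) := by
    intro x h1 h2
    have h := H (x - s) (by omega)
    rw [show s + (x - s) = x by omega] at h
    exact h
  rcases Nat.mod_two_eq_zero_or_one m with hpar | hpar
  · -- m even
    obtain ⟨m', rfl⟩ : ∃ m', m = 2 * m' := ⟨m / 2, by omega⟩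
    have hm' : 1 ≤ m' := by omega
    rcases Nat.mod_two_eq_zero_or_one s with hs | hs
    · obtain ⟨a, rfl⟩ : ∃ a, s = 2 * a := ⟨s / 2, by omega⟩
      refine IH m' (by omega) hm' a ?_
      intro j hj
      have h := H (2 * j) (by omega)
      rw [show 2 * a + 2 * j = 2 * (a + j) by ring,
        show 2 * (a + j) + 2 * m' = 2 * (a + j + m') by ring,
        tm_two_mul, tm_two_mul] at h
      exact h
    · obtain ⟨a, rfl⟩ : ∃ a, s = 2 * a + 1 := ⟨s / 2, by omega⟩
      refine IH m' (by omega) hm' a ?_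
      intro j hj
      have h := H (2 * j) (by omega)
      rw [show 2 * a + 1 + 2 * j = 2 * (a + j) + 1 by ring,
        show 2 * (a + j) + 1 + 2 * m' = 2 * (a + j + m') + 1 by ring,
        tm_two_mul_add_one, tm_two_mul_add_one] at h
      simpa using h
  · -- m odd
    by_cases hm1 : m = 1
    · subst hm1
      exact tm_no_three s (H' s (by omega) (by omega))
        (H' (s + 1) (by omega) (by omega))
    · by_cases hbig : s % 2 + 3 ≤ m
      · -- generic odd case (covers m ≥ 5, and m = 3 with s even)
        set x0 := s + s % 2 with hx0
        have hx0e : x0 % 2 = 0 := by omega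
        obtain ⟨i0, hi0⟩ : ∃ i, x0 + m = 2 * i + 1 := ⟨(x0 + m) / 2, by omega⟩
        have k1 : tm i0 = tm (i0 + 1) := by
          have hA : tm x0 ≠ tm (x0 + 1) := tm_ne_succ_of_even hx0e
          have h1 : tm x0 = tm (x0 + m) := H' x0 (by omega) (by omega)
          have h2 : tm (x0 + 1) = tm (x0 + 1 + m) := H' (x0 + 1) (by omega) (by omega)
          have hB : tm (x0 + m) ≠ tm (x0 + 1 + m) := by
            rw [← h1, ← h2]; exact hA
          rw [hi0, show x0 + 1 + m = 2 * (i0 + 1) by omega,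
            tm_two_mul_add_one, tm_two_mul] at hB
          exact bool_not_ne _ _ hB
        have k2 : tm (i0 + 1) = tm (i0 + 2) := by
          have hx2e : (x0 + 2) % 2 = 0 := by omega
          have hA : tm (x0 + 2) ≠ tm (x0 + 3) := by
            have := tm_ne_succ_of_even hx2e
            simpa [show x0 + 2 + 1 = x0 + 3 by omega] using this
          have h1 : tm (x0 + 2) = tm (x0 + 2 + m) := H' (x0 + 2) (by omega) (by omega)
          have h2 : tm (x0 + 3) = tm (x0 + 3 + m) := H' (x0 + 3) (by omega) (by omega)
          have hB : tm (x0 + 2 + m) ≠ tm (x0 + 3 + m) := by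
            rw [← h1, ← h2]; exact hA
          rw [show x0 + 2 + m = 2 * (i0 + 1) + 1 by omega,
            show x0 + 3 + m = 2 * (i0 + 2) by omega,
            tm_two_mul_add_one, tm_two_mul] at hB
          exact bool_not_ne _ _ hB
        exact tm_no_three i0 k1 k2
      · -- remaining case: m = 3 and s odd
        have hm3 : m = 3 := by omega
        have hsodd : s % 2 = 1 := by omega
        subst hm3
        have e0 : tm (s + 3) = tm s := (H' s (by omega) (by omega)).symm
        have e1 : tm (s + 4) = tm (s + 1) := by
          have := H' (s + 1) (by omega) (by omega)
          rw [show s + 1 + 3 = s + 4 by omega] at this; exact this.symm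
        have e2 : tm (s + 5) = tm (s + 2) := by
          have := H' (s + 2) (by omega) (by omega)
          rw [show s + 2 + 3 = s + 5 by omega] at this; exact this.symm
        have e3 : tm (s + 6) = tm (s + 3) := by
          have := H' (s + 3) (by omega) (by omega)
          rw [show s + 3 + 3 = s + 6 by omega] at this; exact this.symm
        have hA : tm (s + 1) ≠ tm (s + 2) := by
          have := tm_ne_succ_of_even (x := s + 1) (by omega)
          simpa [show s + 1 + 1 = s + 2 by omega] using this
        have hB : tm (s + 3) ≠ tm (s + 4) := by
          have := tm_ne_succ_of_even (x := s + 3) (by omega)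
          simpa [show s + 3 + 1 = s + 4 by omega] using this
        have hC : tm (s + 5) ≠ tm (s + 6) := by
          have := tm_ne_succ_of_even (x := s + 5) (by omega)
          simpa [show s + 5 + 1 = s + 6 by omega] using this
        rw [e0, e1] at hB
        rw [e2, e3, e0] at hC
        exact bool3 _ _ _ hB hA hC

/-! ### Digit-sum additivity and the embedding of `pp` into `t` -/

lemma tm_mul_pow_add (n : ℕ) : ∀ a b, b < 2 ^ n → tm (a * 2 ^ n + b) = xor (tm a) (tm b) := by
  induction n with
  | zero =>
    intro a b hb
    have hb0 : b = 0 := by simpa using hb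
    subst hb0
    simp [tm_zero]
  | succ n IH =>
    intro a b hb
    have h2 : (2 : ℕ) ^ (n + 1) = 2 * 2 ^ n := by ring
    rcases Nat.mod_two_eq_zero_or_one b with hp | hp
    · obtain ⟨b', rfl⟩ : ∃ b', b = 2 * b' := ⟨b / 2, by omega⟩
      have hb' : b' < 2 ^ n := by omega
      rw [show a * 2 ^ (n + 1) + 2 * b' = 2 * (a * 2 ^ n + b') by ring,
        tm_two_mul, IH a b' hb', tm_two_mul]
    · obtain ⟨b', rfl⟩ : ∃ b', b = 2 * b' + 1 := ⟨b / 2, by omega⟩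
      have hb' : b' < 2 ^ n := by omega
      rw [show a * 2 ^ (n + 1) + (2 * b' + 1) = 2 * (a * 2 ^ n + b') + 1 by ring,
        tm_two_mul_add_one, IH a b' hb', tm_two_mul_add_one]
      cases tm a <;> cases tm b' <;> rfl

/-- The word `μⁿ(00) = pp` occurs in `t` at position `5·2ⁿ`. -/
lemma tm_embed (n i : ℕ) (hi : i < 2 * 2 ^ n) : tm (5 * 2 ^ n + i) = tm (i % 2 ^ n) := by
  by_cases h : i < 2 ^ n
  · rw [Nat.mod_eq_of_lt h, tm_mul_pow_add n 5 i h, tm_five]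
    simp
  · have h2 : i - 2 ^ n < 2 ^ n := by omega
    rw [show 5 * 2 ^ n + i = 6 * 2 ^ n + (i - 2 ^ n) by omega,
      tm_mul_pow_add n 6 _ h2, tm_six,
      Nat.mod_eq_sub_mod (by omega), Nat.mod_eq_of_lt h2]
    simp

/-! ### `listPow` plumbing -/

lemma listPow_succ {α : Type*} (p : List α) (k : ℕ) :
    listPow p (k + 1) = p ++ listPow p k := by
  simp [listPow, List.replicate_succ]

lemma listPow_length {α : Type*} (p : List α) (k : ℕ) :
    (listPow p k).length = k * p.length := by
  induction k with
  | zero => simp [listPow]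
  | succ k ih => rw [listPow_succ, List.length_append, ih]; ring

lemma listPow_getElem? {α : Type*} (p : List α) (k : ℕ) :
    ∀ i, i < k * p.length → (listPow p k)[i]? = p[i % p.length]? := by
  induction k with
  | zero => intro i hi; omega
  | succ k ih =>
    intro i hi
    have hsm : (k + 1) * p.length = k * p.length + p.length := by ring
    rw [listPow_succ]
    by_cases h : i < p.length
    · rw [List.getElem?_append_left h, Nat.mod_eq_of_lt h]
    · have hp : 0 < p.length := by
        rcases Nat.eq_zero_or_pos p.length with h0 | h0
        · rw [h0, Nat.mul_zero] at hi; omega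
        · exact h0
      rw [List.getElem?_append_right (by omega : p.length ≤ i)]
      rw [ih (i - p.length) (by omega)]
      rw [Nat.mod_eq_sub_mod (by omega : p.length ≤ i)]

/-- For every `k > 2` and `n ≥ 0`, if `p` is the prefix of length `2^n` of the
Thue–Morse word, then `p^k` is a simple `k`-power. -/
theorem thueMorse_prefix_pow_simple (k n : ℕ) (hk : 2 < k) :
    SimpleKPower k (listPow (List.ofFn fun i : Fin (2 ^ n) => tm i) k) := by
  have hN : 0 < 2 ^ n := Nat.pow_pos (n := n) (by norm_num)
  set p : List Bool := List.ofFn fun i : Fin (2 ^ n) => tm i with hp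
  have hpl : p.length = 2 ^ n := by simp [hp]
  have hpne : p ≠ [] := by
    intro h; rw [h] at hpl; simp at hpl; omega
  have hwl : (listPow p k).length = k * 2 ^ n := by rw [listPow_length, hpl]
  have w_get : ∀ i, i < k * 2 ^ n → (listPow p k)[i]? = some (tm (i % 2 ^ n)) := by
    intro i hi
    rw [listPow_getElem? p k i (by rw [hpl]; exact hi), hpl, hp,
      List.getElem?_ofFn, dif_pos (Nat.mod_lt i hN)]
  constructor
  · exact ⟨p, hpne, rfl⟩
  · rintro y hinf hne ⟨q, hqne, rfl⟩
    obtain ⟨u, v, huv⟩ := hinf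
    set m := q.length with hm
    have hm1 : 1 ≤ m := List.length_pos_iff.mpr hqne
    have hyl : (listPow q k).length = k * m := listPow_length q k
    have hk3 : 3 * m ≤ k * m := Nat.mul_le_mul_right m (by omega)
    have hlen : u.length + (k * m + v.length) = k * 2 ^ n := by
      have := congrArg List.length huv
      simpa [List.length_append, hyl, hwl] using this
    by_cases hmN : 2 ^ n ≤ m
    · -- full length: `y = w`, contradiction
      exact absurd (List.IsInfix.eq_of_length ⟨u, v, huv⟩ (by
        rw [hyl, hwl]
        have h1 : k * 2 ^ n ≤ k * m := Nat.mul_le_mul_left k hmN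
        omega)) hne
    · push_neg at hmN
      set s := u.length with hs
      have hsk : s + k * m ≤ k * 2 ^ n := by omega
      -- the window of the periodic word has period m
      have P : ∀ j, j + m < k * m →
          tm ((s + j) % 2 ^ n) = tm ((s + j + m) % 2 ^ n) := by
        intro j hj
        have wfact : ∀ i, i < k * m → (listPow p k)[s + i]? = (listPow q k)[i]? := by
          intro i hi
          rw [← huv, List.append_assoc,
            List.getElem?_append_right (by omega : u.length ≤ s + i),
            show s + i - u.length = i by omega,
            List.getElem?_append_left (by rw [hyl]; exact hi)]
        have hy : (listPow q k)[j]? = (listPow q k)[j + m]? := by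
          rw [listPow_getElem? q k j (by rw [← hm]; omega),
            listPow_getElem? q k (j + m) (by rw [← hm]; omega),
            Nat.add_mod_right]
        have h1 := wfact j (by omega)
        have h2 := wfact (j + m) (by omega)
        have g1 := w_get (s + j) (by omega)
        have g2 := w_get (s + j + m) (by omega)
        rw [show s + (j + m) = s + j + m by omega] at h2
        have : some (tm ((s + j) % 2 ^ n)) = some (tm ((s + j + m) % 2 ^ n)) := by
          rw [← g1, ← g2, h1, h2, hy]
        exact Option.some.inj this
      -- shift the window so that it embeds into `t`
      set r := s % 2 ^ n with hr
      have hrlt : r < 2 ^ n := Nat.mod_lt s hN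
      set c := if r + 2 * m < 2 * 2 ^ n then 0 else 2 ^ n - r with hc
      have hAB : (s + c) % 2 ^ n + 2 * m < 2 * 2 ^ n ∧ c + 2 * m < k * m := by
        by_cases hcc : r + 2 * m < 2 * 2 ^ n
        · rw [hc, if_pos hcc]
          constructor
          · simpa [← hr] using hcc
          · omega
        · rw [hc, if_neg hcc]
          have hrs : r ≤ s := Nat.mod_le s _
          have hmod : (s + (2 ^ n - r)) % 2 ^ n = 0 := by
            rw [show s + (2 ^ n - r) = (s - r) + 2 ^ n by omega, Nat.add_mod_right]
            have hdm := Nat.div_add_mod s (2 ^ n)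
            rw [show s - r = 2 ^ n * (s / 2 ^ n) by omega]
            exact Nat.mul_mod_right _ _
          rw [hmod]
          omega
      obtain ⟨hA, hB⟩ := hAB
      set X := (s + c) % 2 ^ n with hX
      refine tm_no_overlap m hm1 (5 * 2 ^ n + X) (fun j hj => ?_)
      have e1 := tm_embed n (X + j) (by omega)
      have e2 := tm_embed n (X + (j + m)) (by omega)
      rw [show 5 * 2 ^ n + X + j + m = 5 * 2 ^ n + (X + (j + m)) by omega,
        show 5 * 2 ^ n + X + j = 5 * 2 ^ n + (X + j) by omega, e1, e2,
        hX, Nat.mod_add_mod, Nat.mod_add_mod]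
      have hper := P (c + j) (by omega)
      rw [show s + (c + j) = s + c + j by omega] at hper
      rw [show s + c + (j + m) = s + c + j + m by omega]
      exact hper
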